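/- Suppose D is a predense family of stationary subsets of ω₁, θ ≥ ω₂ is regular, and U := {M ≺ H_θ : M is countable and M captures D}. Then U is projectively stationary: for every stationary S ⊆ ω₁ and every function F : H_θ^{<ω} → H_θ, there exists a countable M ≺ H_θ with M ∈ U, M closed under F, and δ_M ∈ S. -/

import Mathlib

set_option autoImplicit false

namespace NSF

/-- A class of sets is transitive. -/
def TransClass (S : Set ZFSet.{0}) : Prop := ∀ ⦃x⦄, x ∈ S → ∀ ⦃y⦄, y ∈ x → y ∈ S

/-- The transitive closure of a class: the least transitive class containing it. -/
def trclSet (S : Set ZFSet.{0}) : Set ZFSet.{0} :=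
  {x | ∀ T : Set ZFSet.{0}, S ⊆ T → TransClass T → x ∈ T}

/-- `H_θ`: the class of sets hereditarily of cardinality `< θ`. -/
def HSet (θ : Cardinal.{0}) : Set ZFSet.{0} :=
  {x | Cardinal.mk ↥(trclSet x.toSet) < Cardinal.lift.{1} θ}

/-- The first uncountable ordinal. -/
noncomputable def omega1 : Ordinal.{0} := (Cardinal.aleph 1).ord

/-- `C` is club (closed and unbounded) in `lam`. -/
def IsClubBelow (C : Set Ordinal.{0}) (lam : Ordinal.{0}) : Prop :=
  C ⊆ Set.Iio lam ∧
  (∀ α : Ordinal.{0}, α < lam → α ≠ 0 →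
    (∀ β < α, ∃ γ ∈ C, β < γ ∧ γ < α) → α ∈ C) ∧
  ∀ β : Ordinal.{0}, β < lam → ∃ γ ∈ C, β < γ

/-- `S` is a stationary subset of `ω₁` (as a set of ordinals). -/
def StatBelowOmega1 (S : Set Ordinal.{0}) : Prop :=
  S ⊆ Set.Iio omega1 ∧ ∀ C : Set Ordinal.{0}, IsClubBelow C omega1 → (S ∩ C).Nonempty

/-- A `ZFSet` is a stationary subset of `ω₁`. -/
def zStat (S : ZFSet.{0}) : Prop :=
  (∀ x ∈ S.toSet, x.IsOrdinal ∧ ZFSet.rank x < omega1) ∧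
  ∀ C : Set Ordinal.{0}, IsClubBelow C omega1 → ∃ x ∈ S.toSet, ZFSet.rank x ∈ C

/-- `δ_S`: the least ordinal that is not an ordinal member of `S`; for a countable
`M ≺ H_θ` this is `M ∩ ω₁`. -/
noncomputable def deltaOrd (S : Set ZFSet.{0}) : Ordinal.{0} :=
  sInf {o : Ordinal.{0} | ¬ ∃ x ∈ S, x.IsOrdinal ∧ ZFSet.rank x = o}

/-- `m` captures `D`: there is `S ∈ D ∩ m` with `δ_m ∈ S`. -/
noncomputable def Captures (D : Set ZFSet.{0}) (m : ZFSet.{0}) : Prop :=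
  ∃ s ∈ D, s ∈ m ∧ ∃ x ∈ s.toSet, ZFSet.rank x = deltaOrd m.toSet

/-- The language with a single binary relation `∈`. -/
def Lmem : FirstOrder.Language where
  Functions := fun _ => Empty
  Relations := fun n => match n with
    | 2 => PUnit
    | _ => Empty

instance : Lmem.IsRelational := fun _ => inferInstanceAs (IsEmpty Empty)

/-- An `Lmem`-structure whose universe is a class of `ZFSet`s. -/
structure VModel where
  carrier : Set ZFSet.{0}
  rel : ∀ ⦃n : ℕ⦄, Lmem.Relations n → (Fin n → ZFSet.{0}) → Prop
  rel_dom : ∀ ⦃n : ℕ⦄ (r : Lmem.Relations n) (v : Fin n → ZFSet.{0}),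
    rel r v → ∀ i, v i ∈ carrier

/-- Interpretation of a term of the (relational) language under an assignment. -/
def interpTerm {n : ℕ} (v : Fin n → ZFSet.{0}) : Lmem.Term (Empty ⊕ Fin n) → ZFSet.{0}
  | .var (Sum.inr i) => v i
  | .var (Sum.inl e) => e.elim
  | .func f _ => isEmptyElim f

/-- Tarski satisfaction; quantifiers range over the carrier. -/
def VModel.BRealize (M : VModel) :
    ∀ {n : ℕ}, Lmem.BoundedFormula Empty n → (Fin n → ZFSet.{0}) → Prop
  | _, .falsum, _ => False
  | _, .equal t u, v => interpTerm v t = interpTerm v u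
  | _, .rel R ts, v => M.rel R fun i => interpTerm v (ts i)
  | _, .imp φ ψ, v => M.BRealize φ v → M.BRealize ψ v
  | _, .all φ, v => ∀ x ∈ M.carrier, M.BRealize φ (Fin.snoc v x)

/-- Elementary substructure (with the inherited structure). -/
def ElemSub (M N : VModel) : Prop :=
  M.carrier ⊆ N.carrier ∧
  (∀ ⦃n : ℕ⦄ (r : Lmem.Relations n) (v : Fin n → ZFSet.{0}),
      (∀ i, v i ∈ M.carrier) → (M.rel r v ↔ N.rel r v)) ∧
  ∀ ⦃n : ℕ⦄ (φ : Lmem.BoundedFormula Empty n) (v : Fin n → ZFSet.{0}),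
    (∀ i, v i ∈ M.carrier) → (M.BRealize φ v ↔ N.BRealize φ v)

/-- The structure `(S, ∈)`. -/
def memModel (S : Set ZFSet.{0}) : VModel where
  carrier := S
  rel := fun n _r v => (∀ i, v i ∈ S) ∧
    (match n, v with
      | 2, v => v 0 ∈ v 1
      | _, _ => False)
  rel_dom := by intro n r v h i; exact h.1 i

/-- The restriction (inherited structure) of `A` to the class `S`. -/
def restrictTo (A : VModel) (S : Set ZFSet.{0}) : VModel where
  carrier := S ∩ A.carrier
  rel := fun _ r v => A.rel r v ∧ ∀ i, v i ∈ S ∩ A.carrier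
  rel_dom := by intro n r v h i; exact h.2 i

noncomputable def vn (o : Ordinal.{0}) : ZFSet.{0} :=
  ZFSet.range fun i : o.ToType =>
    vn (((Ordinal.ToType.mk (o := o)).symm i : Set.Iio o) : Ordinal.{0})
termination_by o
decreasing_by exact ((Ordinal.ToType.mk (o := o)).symm i).2

theorem mem_vn {x : ZFSet.{0}} {o : Ordinal.{0}} : x ∈ vn o ↔ ∃ o' < o, x = vn o' := by
  rw [vn, ZFSet.mem_range]
  constructor
  · rintro ⟨i, rfl⟩
    exact ⟨_, ((Ordinal.ToType.mk (o := o)).symm i).2, rfl⟩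
  · rintro ⟨o', ho', rfl⟩
    exact ⟨Ordinal.ToType.mk (o := o) ⟨o', ho'⟩, by simp⟩

theorem vn_mem_vn {o' o : Ordinal.{0}} (h : o' < o) : vn o' ∈ vn o := mem_vn.2 ⟨o', h, rfl⟩

theorem rank_vn (o : Ordinal.{0}) : (vn o).rank = o := by
  induction o using Ordinal.induction with
  | h o IH =>
    apply le_antisymm
    · rw [ZFSet.rank_le_iff]
      intro y hy
      obtain ⟨o', ho', rfl⟩ := mem_vn.1 hy
      rw [IH o' ho']; exact ho'
    · apply le_of_forall_lt
      intro c hc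
      calc c = (vn c).rank := (IH c hc).symm
        _ < _ := ZFSet.rank_lt_of_mem (vn_mem_vn hc)

theorem isOrdinal_vn (o : Ordinal.{0}) : (vn o).IsOrdinal := by
  constructor
  · intro y hy z hz
    obtain ⟨o', ho', rfl⟩ := mem_vn.1 hy
    obtain ⟨o'', ho'', rfl⟩ := mem_vn.1 hz
    exact vn_mem_vn (ho''.trans ho')
  · intro y z w hyz hzw hwo
    obtain ⟨o1, ho1, rfl⟩ := mem_vn.1 hwo
    obtain ⟨o2, ho2, rfl⟩ := mem_vn.1 hzw
    obtain ⟨o3, ho3, rfl⟩ := mem_vn.1 hyz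
    exact vn_mem_vn (ho3.trans ho2)

theorem isOrdinal_of_mem {x y : ZFSet.{0}} (h : x.IsOrdinal) (hy : y ∈ x) : y.IsOrdinal := by
  constructor
  · intro z hz w hw
    exact h.mem_trans' hw hz hy
  · intro a b c hab hbc hcy
    exact h.mem_trans' hab hbc (h.isTransitive.mem_trans hcy hy)

theorem eq_vn_rank {x : ZFSet.{0}} (h : x.IsOrdinal) : x = vn x.rank := by
  induction x using ZFSet.inductionOn with
  | h x IH =>
    apply ZFSet.ext
    intro z
    constructor
    · intro hz
      have hzo := isOrdinal_of_mem h hz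
      have hlt := ZFSet.rank_lt_of_mem hz
      rw [IH z hz hzo]
      exact vn_mem_vn hlt
    · intro hz
      obtain ⟨o', ho', rfl⟩ := mem_vn.1 hz
      obtain ⟨y, hy, hle⟩ := ZFSet.lt_rank_iff.1 ho'
      have hyo := isOrdinal_of_mem h hy
      rcases eq_or_lt_of_le hle with heq | hlt
      · rw [heq, ← IH y hy hyo]; exact hy
      · have : vn o' ∈ y := by rw [IH y hy hyo]; exact vn_mem_vn hlt
        exact h.isTransitive.mem_trans this hy

theorem isOrdinal_rank_inj {x y : ZFSet.{0}} (hx : x.IsOrdinal) (hy : y.IsOrdinal)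
    (h : x.rank = y.rank) : x = y := by
  rw [eq_vn_rank hx, eq_vn_rank hy, h]

theorem ZFSet.mem_toSet {x y : ZFSet.{0}} : x ∈ y.toSet ↔ x ∈ y := Iff.rfl

theorem toSet_vn (o : Ordinal.{0}) : (vn o).toSet = vn '' Set.Iio o := by
  ext x
  simp only [ZFSet.mem_toSet, mem_vn, Set.mem_image, Set.mem_Iio]
  exact ⟨fun ⟨o', h, e⟩ => ⟨o', h, e.symm⟩, fun ⟨o', h, e⟩ => ⟨o', h, e.symm⟩⟩
def OrdRanks (Y : Set ZFSet.{0}) : Set Ordinal.{0} := {o | ∃ x ∈ Y, x.IsOrdinal ∧ x.rank = o}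

theorem deltaOrd_eq_sInf_compl (Y : Set ZFSet.{0}) : deltaOrd Y = sInf (OrdRanks Y)ᶜ := rfl

def ordClosed (Y : Set ZFSet.{0}) : Prop :=
  ∀ x ∈ Y, x.IsOrdinal → x.rank < omega1 → ∀ y, y ∈ x → y ∈ Y

theorem ordRanks_dc {Y : Set ZFSet.{0}} (hcl : ordClosed Y) {o : Ordinal.{0}}
    (ho : o ∈ OrdRanks Y) (hlt : o < omega1) {o' : Ordinal.{0}} (h : o' < o) :
    o' ∈ OrdRanks Y := by
  obtain ⟨x, hxY, hxo, hxr⟩ := ho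
  subst hxr
  have hx : x = vn x.rank := eq_vn_rank hxo
  have : vn o' ∈ x := by rw [hx]; exact vn_mem_vn h
  exact ⟨vn o', hcl x hxY hxo hlt _ this, isOrdinal_vn o', rank_vn o'⟩

theorem mk_Iio_omega1 : Cardinal.mk ↥(Set.Iio omega1) = Cardinal.lift.{1} (Cardinal.aleph 1 : Cardinal.{0}) := by
  rw [Ordinal.mk_Iio_ordinal, omega1, Cardinal.card_ord]

theorem not_countable_Iio_omega1 : ¬ (Set.Iio omega1).Countable := by
  intro h
  have h2 : Cardinal.mk ↥(Set.Iio omega1) ≤ Cardinal.aleph0 := Cardinal.mk_le_aleph0_iff.2 h.to_subtype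
  rw [mk_Iio_omega1, ← Cardinal.lift_aleph0.{1,0}, Cardinal.lift_le] at h2
  exact absurd h2 (not_le.2 Cardinal.aleph0_lt_aleph_one)

theorem exists_missing {Y : Set ZFSet.{0}} (hc : Y.Countable) :
    ∃ o : Ordinal.{0}, o < omega1 ∧ o ∉ OrdRanks Y := by
  by_contra h
  push_neg at h
  apply not_countable_Iio_omega1
  have hsub : Set.Iio omega1 ⊆ ZFSet.rank '' Y := by
    intro o ho
    obtain ⟨x, hxY, _, hxr⟩ := h o ho
    exact ⟨x, hxY, hxr⟩
  exact (hc.image _).mono hsub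

theorem delta_spec {Y : Set ZFSet.{0}} (hc : Y.Countable) (hcl : ordClosed Y) :
    deltaOrd Y < omega1 ∧
      ∀ o : Ordinal.{0}, o < omega1 → (o ∈ OrdRanks Y ↔ o < deltaOrd Y) := by
  obtain ⟨o₀, ho₀lt, ho₀⟩ := exists_missing hc
  have hne : ((OrdRanks Y)ᶜ).Nonempty := ⟨o₀, ho₀⟩
  have hmem : deltaOrd Y ∈ (OrdRanks Y)ᶜ := by
    rw [deltaOrd_eq_sInf_compl]; exact csInf_mem hne
  have hle : deltaOrd Y ≤ o₀ := by
    rw [deltaOrd_eq_sInf_compl]; exact csInf_le' ho₀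
  have hδlt : deltaOrd Y < omega1 := lt_of_le_of_lt hle ho₀lt
  refine ⟨hδlt, fun o holt => ⟨fun hoR => ?_, fun holtδ => ?_⟩⟩
  · rcases lt_trichotomy o (deltaOrd Y) with h | h | h
    · exact h
    · exact absurd (h ▸ hoR) hmem
    · exact absurd (ordRanks_dc hcl hoR holt h) hmem
  · by_contra hnot
    have : deltaOrd Y ≤ o := by
      rw [deltaOrd_eq_sInf_compl]; exact csInf_le' hnot
    exact absurd holtδ (not_lt.2 this)

theorem deltaOrd_mono {Y Y' : Set ZFSet.{0}} (hc : Y.Countable) (hcl : ordClosed Y)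
    (hc' : Y'.Countable) (hcl' : ordClosed Y') (h : Y ⊆ Y') : deltaOrd Y ≤ deltaOrd Y' := by
  obtain ⟨hδ, hiff⟩ := delta_spec hc hcl
  obtain ⟨hδ', hiff'⟩ := delta_spec hc' hcl'
  apply le_of_forall_lt
  intro o ho
  have holt : o < omega1 := ho.trans hδ
  obtain ⟨x, hx, p, q⟩ := (hiff o holt).2 ho
  exact (hiff' o holt).1 ⟨x, h hx, p, q⟩

-- HSet lemmas
theorem subset_trclSet (S : Set ZFSet.{0}) : S ⊆ trclSet S := fun x hx T hST _ => hST hx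

theorem transClass_trclSet (S : Set ZFSet.{0}) : TransClass (trclSet S) :=
  fun x hx y hy T hST hT => hT (hx T hST hT) hy

theorem trclSet_min {S T : Set ZFSet.{0}} (h : S ⊆ T) (hT : TransClass T) : trclSet S ⊆ T :=
  fun _ hx => hx T h hT

theorem mem_HSet {θ : Cardinal.{0}} {x : ZFSet.{0}} {W : Set ZFSet.{0}} (hW : TransClass W)
    (hsub : x.toSet ⊆ W) (hcard : Cardinal.mk ↥W < Cardinal.lift.{1} θ) : x ∈ HSet θ :=
  lt_of_le_of_lt (Cardinal.mk_le_mk_of_subset (trclSet_min hsub hW)) hcard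

theorem HSet_trans {θ : Cardinal.{0}} : TransClass (HSet θ) := by
  intro x hx y hy
  have hsub : trclSet y.toSet ⊆ trclSet x.toSet := by
    apply trclSet_min _ (transClass_trclSet _)
    intro z hz
    exact transClass_trclSet x.toSet (subset_trclSet x.toSet hy) hz
  exact lt_of_le_of_lt (Cardinal.mk_le_mk_of_subset hsub) hx

def smallOrds : Set ZFSet.{0} := {y | y.IsOrdinal ∧ y.rank < omega1}

theorem transClass_smallOrds : TransClass smallOrds := by
  rintro x ⟨hxo, hxr⟩ y hy
  exact ⟨isOrdinal_of_mem hxo hy, (ZFSet.rank_lt_of_mem hy).trans hxr⟩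

theorem mk_smallOrds_le : Cardinal.mk ↥smallOrds ≤ Cardinal.lift.{1} (Cardinal.aleph 1 : Cardinal.{0}) := by
  rw [← mk_Iio_omega1]
  have hinj : Function.Injective
      (fun y : ↥smallOrds => (⟨(y : ZFSet.{0}).rank, y.prop.2⟩ : ↥(Set.Iio omega1))) := by
    rintro ⟨y, hy⟩ ⟨z, hz⟩ h
    simp only [Subtype.mk.injEq] at h ⊢
    exact isOrdinal_rank_inj hy.1 hz.1 (congrArg Subtype.val h)
  exact Cardinal.mk_le_of_injective hinj

theorem mem_HSet_of_smallOrds {θ : Cardinal.{0}} (hθ : Cardinal.aleph 2 ≤ θ) {x : ZFSet.{0}}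
    (h : x.toSet ⊆ smallOrds) : x ∈ HSet θ := by
  apply mem_HSet transClass_smallOrds h
  apply lt_of_le_of_lt mk_smallOrds_le
  apply Cardinal.lift_lt.2
  exact lt_of_lt_of_le (Cardinal.aleph_lt_aleph.2 one_lt_two) hθ

theorem empty_mem_HSet {θ : Cardinal.{0}} (hθ : Cardinal.aleph 2 ≤ θ) : (∅ : ZFSet.{0}) ∈ HSet θ := by
  apply mem_HSet_of_smallOrds hθ
  intro z hz
  simp [ZFSet.mem_toSet] at hz

theorem vn_mem_HSet {θ : Cardinal.{0}} (hθ : Cardinal.aleph 2 ≤ θ) {o : Ordinal.{0}}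
    (ho : o < omega1) : vn o ∈ HSet θ := by
  apply mem_HSet_of_smallOrds hθ
  intro z hz
  rw [ZFSet.mem_toSet] at hz
  obtain ⟨o', ho', rfl⟩ := mem_vn.1 hz
  exact ⟨isOrdinal_vn o', (rank_vn o').symm ▸ ho'.trans ho⟩

-- countability
theorem countable_tuples {X : Set ZFSet.{0}} (hX : X.Countable) (n : ℕ) :
    {v : Fin n → ZFSet.{0} | ∀ i, v i ∈ X}.Countable := by
  have : Countable ↥X := hX.to_subtype
  apply Set.Countable.mono _ (Set.countable_range fun g : Fin n → ↥X => fun i => ((g i : ZFSet.{0})))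
  intro v hv
  exact ⟨fun i => ⟨v i, hv i⟩, rfl⟩

theorem countable_lists {X : Set ZFSet.{0}} (hX : X.Countable) :
    {l : List ZFSet.{0} | ∀ x ∈ l, x ∈ X}.Countable := by
  have : Countable ↥X := hX.to_subtype
  apply Set.Countable.mono _ (Set.countable_range fun l : List ↥X => l.map Subtype.val)
  intro l hl
  refine ⟨l.attach.map fun x => (⟨x.1, hl _ x.2⟩ : ↥X), ?_⟩
  show List.map Subtype.val (l.attach.map fun x => (⟨x.1, hl _ x.2⟩ : ↥X)) = l
  rw [List.map_map]
  simpa using List.attach_map_val l id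

theorem countable_toSet_of_smallOrd {x : ZFSet.{0}} (h1 : x.IsOrdinal) (h2 : x.rank < omega1) :
    x.toSet.Countable := by
  rw [eq_vn_rank h1, toSet_vn]
  apply Set.Countable.image
  rw [← Set.countable_coe_iff, ← Cardinal.mk_le_aleph0_iff, Ordinal.mk_Iio_ordinal]
  have : x.rank.card < Cardinal.aleph 1 := Cardinal.lt_ord.1 h2
  have h3 : x.rank.card ≤ Cardinal.aleph0 := by
    rwa [← Cardinal.succ_aleph0, Order.lt_succ_iff] at this
  calc Cardinal.lift.{1} x.rank.card ≤ Cardinal.lift.{1} Cardinal.aleph0 := Cardinal.lift_le.2 h3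
    _ = Cardinal.aleph0 := Cardinal.lift_aleph0.{1,0}

theorem countable_Iio_of_lt_omega1 {o : Ordinal.{0}} (ho : o < omega1) :
    (Set.Iio o).Countable := by
  rw [← Set.countable_coe_iff, ← Cardinal.mk_le_aleph0_iff, Ordinal.mk_Iio_ordinal]
  have h3 : o.card ≤ Cardinal.aleph0 := by
    rw [← Order.lt_succ_iff, Cardinal.succ_aleph0]; exact Cardinal.lt_ord.1 ho
  calc Cardinal.lift.{1} o.card ≤ Cardinal.lift.{1} Cardinal.aleph0 := Cardinal.lift_le.2 h3
    _ = Cardinal.aleph0 := Cardinal.lift_aleph0.{1,0}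
-- PART 3 : Skolem functions and Tarski-Vaught
open FirstOrder in
abbrev FIdx : Type := Σ n : ℕ, (Lmem.BoundedFormula Empty (n+1) : Type)

instance (n : ℕ) : Countable (Lmem.Relations n) :=
  match n with
  | 0 => inferInstanceAs (Countable Empty)
  | 1 => inferInstanceAs (Countable Empty)
  | 2 => inferInstanceAs (Countable PUnit)
  | (_+3) => inferInstanceAs (Countable Empty)

instance (n : ℕ) : Countable (Lmem.Functions n) := inferInstanceAs (Countable Empty)

instance : Countable Lmem.Symbols := by
  unfold FirstOrder.Language.Symbols
  infer_instance

theorem Lmem_card_le : Lmem.card ≤ Cardinal.aleph0 := by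
  rw [FirstOrder.Language.card]
  exact Cardinal.mk_le_aleph0

instance : Countable (Σ n : ℕ, Lmem.BoundedFormula Empty n) := by
  rw [← Cardinal.mk_le_aleph0_iff]
  refine le_trans FirstOrder.Language.BoundedFormula.card_le ?_
  apply max_le le_rfl
  simp only [Cardinal.mk_empty, Cardinal.lift_zero, zero_add]
  calc Cardinal.lift Lmem.card ≤ Cardinal.lift Cardinal.aleph0 := Cardinal.lift_le.2 Lmem_card_le
    _ = Cardinal.aleph0 := by simp

instance : Countable FIdx := by
  have hinj : Function.Injective
      (fun p : FIdx => (⟨p.1 + 1, p.2⟩ : Σ n : ℕ, Lmem.BoundedFormula Empty n)) := by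
    rintro ⟨n, φ⟩ ⟨m, ψ⟩ h
    have h1 : n = m := by simpa using congrArg Sigma.fst h
    subst h1
    simpa using h
  exact Function.Injective.countable hinj

noncomputable def sk (θ : Cardinal.{0}) (p : FIdx) (v : Fin p.1 → ZFSet.{0}) : ZFSet.{0} :=
  @dite _ (∃ x : ZFSet.{0}, x ∈ HSet θ ∧ (memModel (HSet θ)).BRealize p.2 (Fin.snoc v x))
    (Classical.dec _) (fun h => h.choose) (fun _ => (∅ : ZFSet.{0}))

theorem sk_spec {θ : Cardinal.{0}} {p : FIdx} {v : Fin p.1 → ZFSet.{0}}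
    (h : ∃ x : ZFSet.{0}, x ∈ HSet θ ∧ (memModel (HSet θ)).BRealize p.2 (Fin.snoc v x)) :
    sk θ p v ∈ HSet θ ∧ (memModel (HSet θ)).BRealize p.2 (Fin.snoc v (sk θ p v)) := by
  rw [sk, dif_pos h]
  exact h.choose_spec

theorem sk_mem_HSet {θ : Cardinal.{0}} (hθ : Cardinal.aleph 2 ≤ θ) (p : FIdx)
    (v : Fin p.1 → ZFSet.{0}) : sk θ p v ∈ HSet θ := by
  rw [sk]
  by_cases h : ∃ x : ZFSet.{0}, x ∈ HSet θ ∧ (memModel (HSet θ)).BRealize p.2 (Fin.snoc v x)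
  · rw [dif_pos h]; exact h.choose_spec.1
  · rw [dif_neg h]; exact empty_mem_HSet hθ

theorem interpTerm_mem {n : ℕ} {A : Set ZFSet.{0}} {v : Fin n → ZFSet.{0}}
    (hv : ∀ i, v i ∈ A) (t : Lmem.Term (Empty ⊕ Fin n)) : interpTerm v t ∈ A := by
  match t with
  | .var (Sum.inr i) => exact hv i
  | .var (Sum.inl e) => exact e.elim
  | .func f _ => exact isEmptyElim f

theorem snoc_mem {n : ℕ} {A : Set ZFSet.{0}} {v : Fin n → ZFSet.{0}} {x : ZFSet.{0}}
    (hv : ∀ i, v i ∈ A) (hx : x ∈ A) :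
    ∀ i, (Fin.snoc v x : Fin (n+1) → ZFSet.{0}) i ∈ A := by
  intro i
  refine Fin.lastCases ?_ ?_ i
  · rw [Fin.snoc_last]; exact hx
  · intro j; rw [Fin.snoc_castSucc]; exact hv j

theorem realize_iff_of_skClosed {θ : Cardinal.{0}} {Y : Set ZFSet.{0}}
    (hsk : ∀ (p : FIdx) (v : Fin p.1 → ZFSet.{0}), (∀ i, v i ∈ Y) → sk θ p v ∈ Y)
    {n : ℕ} (φ : Lmem.BoundedFormula Empty n) :
    ∀ (v : Fin n → ZFSet.{0}), (∀ i, v i ∈ Y ∩ HSet θ) →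
      ((restrictTo (memModel (HSet θ)) Y).BRealize φ v ↔ (memModel (HSet θ)).BRealize φ v) := by
  induction φ with
  | falsum => exact fun v hv => Iff.rfl
  | equal t u => exact fun v hv => Iff.rfl
  | rel R ts =>
    intro v hv
    show ((memModel (HSet θ)).rel R _ ∧ _) ↔ (memModel (HSet θ)).rel R _
    constructor
    · rintro ⟨h1, _⟩; exact h1
    · intro h1
      exact ⟨h1, fun i => interpTerm_mem hv _⟩
  | imp φ ψ ih1 ih2 =>
    intro v hv
    exact imp_congr (ih1 v hv) (ih2 v hv)
  | all ψ ih =>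
    intro v hv
    constructor
    · intro hs
      show ∀ x ∈ HSet θ, (memModel (HSet θ)).BRealize ψ (Fin.snoc v x)
      by_contra hbig
      push_neg at hbig
      obtain ⟨x, hxH, hxn⟩ := hbig
      have hex : ∃ x : ZFSet.{0}, x ∈ HSet θ ∧
          (memModel (HSet θ)).BRealize (ψ.not) (Fin.snoc v x) :=
        ⟨x, hxH, fun hp => hxn hp⟩
      obtain ⟨hwH, hwreal⟩ := sk_spec (p := ⟨_, ψ.not⟩) (v := v) hex
      have hwY : sk θ ⟨_, ψ.not⟩ v ∈ Y := hsk ⟨_, ψ.not⟩ v (fun i => (hv i).1)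
      have hsnoc := snoc_mem hv (A := Y ∩ HSet θ) ⟨hwY, hwH⟩
      have hsmall : (restrictTo (memModel (HSet θ)) Y).BRealize ψ
          (Fin.snoc v (sk θ ⟨_, ψ.not⟩ v)) := hs _ ⟨hwY, hwH⟩
      exact hwreal ((ih _ hsnoc).1 hsmall)
    · intro hb x hx
      have hx' : x ∈ Y ∩ HSet θ := hx
      exact (ih _ (snoc_mem hv hx')).2 (hb x hx'.2)

theorem elemSub_of_skClosed {θ : Cardinal.{0}} {Y : Set ZFSet.{0}}
    (hsk : ∀ (p : FIdx) (v : Fin p.1 → ZFSet.{0}), (∀ i, v i ∈ Y) → sk θ p v ∈ Y) :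
    ElemSub (restrictTo (memModel (HSet θ)) Y) (memModel (HSet θ)) := by
  refine ⟨Set.inter_subset_right, ?_, ?_⟩
  · intro n r v hv
    constructor
    · rintro ⟨h1, _⟩; exact h1
    · intro h1; exact ⟨h1, hv⟩
  · intro n φ v hv
    exact realize_iff_of_skClosed hsk φ v hv
-- PART 4 : hulls
section Hull

variable (θ : Cardinal.{0}) (F : List ZFSet.{0} → ZFSet.{0})

def IsHClosed (Y : Set ZFSet.{0}) : Prop :=
  (∀ (p : FIdx) (v : Fin p.1 → ZFSet.{0}), (∀ i, v i ∈ Y) → sk θ p v ∈ Y) ∧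
  (∀ l : List ZFSet.{0}, (∀ x ∈ l, x ∈ Y) → F l ∈ Y) ∧
  ordClosed Y

def hstep (X : Set ZFSet.{0}) : Set ZFSet.{0} :=
  X ∪ ((⋃ p : FIdx, sk θ p '' {v | ∀ i, v i ∈ X})
    ∪ (F '' {l | ∀ x ∈ l, x ∈ X})
    ∪ (⋃ x ∈ X, {y : ZFSet.{0} | (x.IsOrdinal ∧ x.rank < omega1) ∧ y ∈ x}))

def hull (X : Set ZFSet.{0}) : Set ZFSet.{0} := ⋃ n : ℕ, (hstep θ F)^[n] X

theorem subset_hstep (X : Set ZFSet.{0}) : X ⊆ hstep θ F X := Set.subset_union_left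

theorem hstep_mono {X Y : Set ZFSet.{0}} (h : X ⊆ Y) : hstep θ F X ⊆ hstep θ F Y := by
  apply Set.union_subset_union h
  apply Set.union_subset_union
  apply Set.union_subset_union
  · exact Set.iUnion_mono fun p => Set.image_mono fun v hv i => h (hv i)
  · exact Set.image_mono fun l hl x hx => h (hl x hx)
  · exact Set.iUnion₂_mono' fun x hx => ⟨x, h hx, le_rfl⟩

theorem iter_succ_subset (X : Set ZFSet.{0}) (n : ℕ) :
    (hstep θ F)^[n] X ⊆ (hstep θ F)^[n+1] X := by
  induction n with
  | zero => exact subset_hstep θ F X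
  | succ n ih =>
    rw [Function.iterate_succ_apply', Function.iterate_succ_apply']
    exact hstep_mono θ F ih

theorem iter_le_subset (X : Set ZFSet.{0}) {n m : ℕ} (h : n ≤ m) :
    (hstep θ F)^[n] X ⊆ (hstep θ F)^[m] X := by
  induction h with
  | refl => exact le_rfl
  | step _ ih => exact ih.trans (iter_succ_subset θ F X _)

theorem subset_hull (X : Set ZFSet.{0}) : X ⊆ hull θ F X :=
  Set.subset_iUnion (fun n : ℕ => (hstep θ F)^[n] X) 0

theorem list_bound_nat {X : Set ZFSet.{0}} :
    ∀ l : List ZFSet.{0}, (∀ x ∈ l, x ∈ hull θ F X) →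
      ∃ n : ℕ, ∀ x ∈ l, x ∈ (hstep θ F)^[n] X := by
  intro l
  induction l with
  | nil => exact fun _ => ⟨0, by simp⟩
  | cons a l ih =>
    intro h
    obtain ⟨n₁, hn₁⟩ := Set.mem_iUnion.1 (h a (List.mem_cons_self))
    obtain ⟨n₂, hn₂⟩ := ih fun x hx => h x (List.mem_cons_of_mem a hx)
    refine ⟨max n₁ n₂, fun x hx => ?_⟩
    rcases List.mem_cons.1 hx with rfl | hx
    · exact iter_le_subset θ F X (le_max_left _ _) hn₁
    · exact iter_le_subset θ F X (le_max_right _ _) (hn₂ x hx)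

theorem tuple_bound_nat {X : Set ZFSet.{0}} {k : ℕ} (v : Fin k → ZFSet.{0})
    (hv : ∀ i, v i ∈ hull θ F X) : ∃ n : ℕ, ∀ i, v i ∈ (hstep θ F)^[n] X := by
  obtain ⟨n, hn⟩ := list_bound_nat θ F (List.ofFn v) (by
    intro x hx
    obtain ⟨i, rfl⟩ := Set.mem_range.1 (List.mem_ofFn.1 hx)
    exact hv i)
  exact ⟨n, fun i => hn (v i) (List.mem_ofFn.2 ⟨i, rfl⟩)⟩

theorem hull_closed (X : Set ZFSet.{0}) : IsHClosed θ F (hull θ F X) := by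
  refine ⟨?_, ?_, ?_⟩
  · intro p v hv
    obtain ⟨n, hn⟩ := tuple_bound_nat θ F v hv
    apply Set.mem_iUnion.2 ⟨n+1, ?_⟩
    rw [Function.iterate_succ_apply']
    refine Set.mem_union_right _ (Set.mem_union_left _ (Set.mem_union_left _ ?_))
    exact Set.mem_iUnion.2 ⟨p, ⟨v, hn, rfl⟩⟩
  · intro l hl
    obtain ⟨n, hn⟩ := list_bound_nat θ F l hl
    apply Set.mem_iUnion.2 ⟨n+1, ?_⟩
    rw [Function.iterate_succ_apply']
    refine Set.mem_union_right _ (Set.mem_union_left _ (Set.mem_union_right _ ?_))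
    exact ⟨l, hn, rfl⟩
  · intro x hx h1 h2 y hy
    obtain ⟨n, hn⟩ := Set.mem_iUnion.1 hx
    apply Set.mem_iUnion.2 ⟨n+1, ?_⟩
    rw [Function.iterate_succ_apply']
    refine Set.mem_union_right _ (Set.mem_union_right _ ?_)
    exact Set.mem_biUnion hn ⟨⟨h1, h2⟩, hy⟩

theorem hull_least {X Y : Set ZFSet.{0}} (hXY : X ⊆ Y) (hY : IsHClosed θ F Y) :
    hull θ F X ⊆ Y := by
  apply Set.iUnion_subset
  intro n
  induction n with
  | zero => exact hXY
  | succ n ih =>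
    rw [Function.iterate_succ_apply']
    rintro z (hz | ((hz | hz) | hz))
    · exact ih hz
    · obtain ⟨p, hp⟩ := Set.mem_iUnion.1 hz
      obtain ⟨v, hv, rfl⟩ := hp
      exact hY.1 p v fun i => ih (hv i)
    · obtain ⟨l, hl, rfl⟩ := hz
      exact hY.2.1 l fun x hx => ih (hl x hx)
    · obtain ⟨x, hx, ⟨⟨h1, h2⟩, hzx⟩⟩ := Set.mem_iUnion₂.1 hz
      exact hY.2.2 x (ih hx) h1 h2 z hzx

theorem hull_mono {X X' : Set ZFSet.{0}} (h : X ⊆ X') : hull θ F X ⊆ hull θ F X' :=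
  hull_least θ F (h.trans (subset_hull θ F X')) (hull_closed θ F X')

theorem hstep_countable {X : Set ZFSet.{0}} (hX : X.Countable) : (hstep θ F X).Countable := by
  refine (hX.union (Set.Countable.union (Set.Countable.union ?_ ?_) ?_))
  · exact Set.countable_iUnion fun p => (countable_tuples hX p.1).image _
  · exact (countable_lists hX).image _
  · refine Set.Countable.biUnion hX fun x hx => ?_
    by_cases h : x.IsOrdinal ∧ x.rank < omega1
    · exact (countable_toSet_of_smallOrd h.1 h.2).mono
        (fun y hy => by rw [ZFSet.mem_toSet]; exact hy.2)
    · refine Set.Countable.mono ?_ Set.countable_empty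
      rintro y ⟨hc, _⟩
      exact absurd hc h

theorem hull_countable {X : Set ZFSet.{0}} (hX : X.Countable) : (hull θ F X).Countable := by
  apply Set.countable_iUnion
  intro n
  induction n with
  | zero => exact hX
  | succ n ih =>
    rw [Function.iterate_succ_apply']
    exact hstep_countable θ F ih

theorem hull_ordClosed (X : Set ZFSet.{0}) : ordClosed (hull θ F X) := (hull_closed θ F X).2.2

theorem HSet_hclosed (hθ : Cardinal.aleph 2 ≤ θ)
    (hF : ∀ l : List ZFSet.{0}, (∀ x ∈ l, x ∈ HSet θ) → F l ∈ HSet θ) :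
    IsHClosed θ F (HSet θ) :=
  ⟨fun p v _ => sk_mem_HSet hθ p v, hF, fun x hx _ _ y hy => HSet_trans hx hy⟩

theorem hull_subset_HSet (hθ : Cardinal.aleph 2 ≤ θ)
    (hF : ∀ l : List ZFSet.{0}, (∀ x ∈ l, x ∈ HSet θ) → F l ∈ HSet θ)
    {X : Set ZFSet.{0}} (hX : X ⊆ HSet θ) : hull θ F X ⊆ HSet θ :=
  hull_least θ F hX (HSet_hclosed θ F hθ hF)

theorem directed_list_bound {β : Ordinal.{0}} (hβ0 : 0 < β) (H : Ordinal.{0} → Set ZFSet.{0})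
    (hmono : ∀ ⦃γ γ' : Ordinal.{0}⦄, γ ≤ γ' → H γ ⊆ H γ') :
    ∀ l : List ZFSet.{0}, (∀ x ∈ l, x ∈ ⋃ γ : ↥(Set.Iio β), H γ) →
      ∃ γ : Ordinal.{0}, γ < β ∧ ∀ x ∈ l, x ∈ H γ := by
  intro l
  induction l with
  | nil => exact fun _ => ⟨0, hβ0, by simp⟩
  | cons a l ih =>
    intro h
    obtain ⟨γ₁, hγ₁⟩ := Set.mem_iUnion.1 (h a (List.mem_cons_self))
    obtain ⟨γ₂, hγ₂lt, hγ₂⟩ := ih fun x hx => h x (List.mem_cons_of_mem a hx)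
    refine ⟨max (γ₁ : Ordinal.{0}) γ₂, max_lt γ₁.2 hγ₂lt, fun x hx => ?_⟩
    rcases List.mem_cons.1 hx with rfl | hx
    · exact hmono (le_max_left _ _) hγ₁
    · exact hmono (le_max_right _ _) (hγ₂ x hx)

theorem hull_iUnion {β : Ordinal.{0}} (hβ0 : 0 < β) (X : Ordinal.{0} → Set ZFSet.{0})
    (hmono : ∀ ⦃γ γ' : Ordinal.{0}⦄, γ ≤ γ' → X γ ⊆ X γ') :
    hull θ F (⋃ γ : ↥(Set.Iio β), X γ) = ⋃ γ : ↥(Set.Iio β), hull θ F (X γ) := by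
  have Hmono : ∀ ⦃γ γ' : Ordinal.{0}⦄, γ ≤ γ' → hull θ F (X γ) ⊆ hull θ F (X γ') :=
    fun γ γ' h => hull_mono θ F (hmono h)
  apply Set.Subset.antisymm
  · apply hull_least
    · exact Set.iUnion_mono fun γ => subset_hull θ F (X γ)
    · refine ⟨?_, ?_, ?_⟩
      · intro p v hv
        obtain ⟨γ, hγlt, hγ⟩ := directed_list_bound hβ0 (fun γ => hull θ F (X γ)) Hmono
          (List.ofFn v) (by
            intro x hx
            obtain ⟨i, rfl⟩ := Set.mem_range.1 (List.mem_ofFn.1 hx)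
            exact hv i)
        apply Set.mem_iUnion.2 ⟨⟨γ, hγlt⟩, ?_⟩
        exact (hull_closed θ F (X γ)).1 p v fun i => hγ (v i) (List.mem_ofFn.2 ⟨i, rfl⟩)
      · intro l hl
        obtain ⟨γ, hγlt, hγ⟩ := directed_list_bound hβ0 (fun γ => hull θ F (X γ)) Hmono l hl
        exact Set.mem_iUnion.2 ⟨⟨γ, hγlt⟩, (hull_closed θ F (X γ)).2.1 l hγ⟩
      · intro x hx h1 h2 y hy
        obtain ⟨γ, hγ⟩ := Set.mem_iUnion.1 hx
        exact Set.mem_iUnion.2 ⟨γ, (hull_closed θ F (X γ)).2.2 x hγ h1 h2 y hy⟩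
  · exact Set.iUnion_subset fun γ => hull_mono θ F (Set.subset_iUnion (fun γ : ↥(Set.Iio β) => X γ) γ)

end Hull
-- PART 5 : the function g, its club of fixed points
section Club

variable (θ : Cardinal.{0}) (F : List ZFSet.{0} → ZFSet.{0}) (X₀ : Set ZFSet.{0})

def seed (β : Ordinal.{0}) : Set ZFSet.{0} := X₀ ∪ vn '' Set.Iio β

noncomputable def gfun (β : Ordinal.{0}) : Ordinal.{0} := deltaOrd (hull θ F (seed X₀ β))

variable {X₀}

theorem seed_mono ⦃γ γ' : Ordinal.{0}⦄ (h : γ ≤ γ') : seed X₀ γ ⊆ seed X₀ γ' :=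
  Set.union_subset_union le_rfl (Set.image_mono (Set.Iio_subset_Iio h))

theorem seed_countable (hX₀c : X₀.Countable) {β : Ordinal.{0}} (hβ : β < omega1) :
    (seed X₀ β).Countable :=
  hX₀c.union ((countable_Iio_of_lt_omega1 hβ).image _)

theorem g_spec (hX₀c : X₀.Countable) {β : Ordinal.{0}} (hβ : β < omega1) :
    gfun θ F X₀ β < omega1 ∧
      ∀ o : Ordinal.{0}, o < omega1 →
        (o ∈ OrdRanks (hull θ F (seed X₀ β)) ↔ o < gfun θ F X₀ β) :=
  delta_spec (hull_countable θ F (seed_countable hX₀c hβ)) (hull_ordClosed θ F _)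

theorem g_lt (hX₀c : X₀.Countable) {β : Ordinal.{0}} (hβ : β < omega1) :
    gfun θ F X₀ β < omega1 := (g_spec θ F hX₀c hβ).1

theorem g_ge (hX₀c : X₀.Countable) {β : Ordinal.{0}} (hβ : β < omega1) : β ≤ gfun θ F X₀ β := by
  apply le_of_forall_lt
  intro o ho
  refine ((g_spec θ F hX₀c hβ).2 o (ho.trans hβ)).1 ?_
  refine ⟨vn o, subset_hull θ F _ (Set.mem_union_right _ ⟨o, ho, rfl⟩), isOrdinal_vn o, rank_vn o⟩

theorem g_mono (hX₀c : X₀.Countable) {β β' : Ordinal.{0}} (h : β ≤ β') (hβ' : β' < omega1) :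
    gfun θ F X₀ β ≤ gfun θ F X₀ β' :=
  deltaOrd_mono (hull_countable θ F (seed_countable hX₀c ((lt_of_le_of_lt h hβ'))))
    (hull_ordClosed θ F _) (hull_countable θ F (seed_countable hX₀c hβ'))
    (hull_ordClosed θ F _) (hull_mono θ F (seed_mono h))

theorem seed_limit {β : Ordinal.{0}} (h0 : 0 < β) (hlim : ∀ γ < β, γ + 1 < β) :
    seed X₀ β = ⋃ γ : ↥(Set.Iio β), seed X₀ (γ : Ordinal.{0}) := by
  apply Set.Subset.antisymm
  · rintro z (hz | ⟨o, ho, rfl⟩)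
    · exact Set.mem_iUnion.2 ⟨⟨0, h0⟩, Set.mem_union_left _ hz⟩
    · exact Set.mem_iUnion.2 ⟨⟨o + 1, hlim o ho⟩,
        Set.mem_union_right _ ⟨o, Order.lt_succ o, rfl⟩⟩
  · exact Set.iUnion_subset fun γ => seed_mono (le_of_lt γ.2)

theorem g_limit (hX₀c : X₀.Countable) {β : Ordinal.{0}} (hβ : β < omega1) (h0 : 0 < β)
    (hlim : ∀ γ < β, γ + 1 < β) (o : Ordinal.{0}) :
    o < gfun θ F X₀ β ↔ ∃ γ < β, o < gfun θ F X₀ γ := by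
  constructor
  · intro ho
    have holt : o < omega1 := ho.trans (g_lt θ F hX₀c hβ)
    have hmem : o ∈ OrdRanks (hull θ F (seed X₀ β)) := ((g_spec θ F hX₀c hβ).2 o holt).2 ho
    rw [seed_limit h0 hlim, hull_iUnion θ F h0 (seed X₀) (seed_mono)] at hmem
    obtain ⟨x, hx, hxo, hxr⟩ := hmem
    obtain ⟨γ, hγ⟩ := Set.mem_iUnion.1 hx
    refine ⟨γ, γ.2, ((g_spec θ F hX₀c (lt_trans γ.2 hβ)).2 o holt).1 ⟨x, hγ, hxo, hxr⟩⟩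
  · rintro ⟨γ, hγβ, ho⟩
    exact lt_of_lt_of_le ho (g_mono θ F hX₀c (le_of_lt hγβ) hβ)

def Cset (X : Set ZFSet.{0}) : Set Ordinal.{0} := {δ | δ < omega1 ∧ 0 < δ ∧ gfun θ F X δ = δ}

theorem omega1_isLimit : Order.IsSuccLimit omega1 :=
  Cardinal.isSuccLimit_ord (le_of_lt Cardinal.aleph0_lt_aleph_one)

theorem Cset_club (hX₀c : X₀.Countable) : IsClubBelow (Cset θ F X₀) omega1 := by
  refine ⟨fun δ hδ => hδ.1, ?_, ?_⟩
  · intro α hα hα0 hacc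
    have h0 : 0 < α := pos_iff_ne_zero.2 hα0
    have hlim : ∀ γ < α, γ + 1 < α := by
      intro γ hγ
      obtain ⟨γ', hγ'C, hγγ', hγ'α⟩ := hacc γ hγ
      exact lt_of_le_of_lt (Order.add_one_le_of_lt hγγ') hγ'α
    refine ⟨hα, h0, le_antisymm ?_ (g_ge θ F hX₀c hα)⟩
    apply le_of_forall_lt
    intro o ho
    obtain ⟨γ, hγα, hoγ⟩ := (g_limit θ F hX₀c hα h0 hlim o).1 ho
    obtain ⟨γ', hγ'C, hγγ', hγ'α⟩ := hacc γ hγα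
    calc o < gfun θ F X₀ γ := hoγ
      _ ≤ gfun θ F X₀ γ' := g_mono θ F hX₀c (le_of_lt hγγ') hγ'C.1
      _ = γ' := hγ'C.2.2
      _ < α := hγ'α
  · intro β hβ
    -- iterate
    have hb : ∃ b : ℕ → Ordinal.{0}, b 0 = β + 1 ∧
        ∀ n, b (n + 1) = max (gfun θ F X₀ (b n)) (b n) + 1 := by
      refine ⟨fun n => Nat.rec (β + 1) (fun _ bn => max (gfun θ F X₀ bn) bn + 1) n, rfl, fun n => rfl⟩
    obtain ⟨b, hb0, hbs⟩ := hb
    have hblt : ∀ n, b n < omega1 := by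
      intro n
      induction n with
      | zero => rw [hb0]; exact omega1_isLimit.succ_lt hβ
      | succ n ih =>
        rw [hbs]
        exact omega1_isLimit.succ_lt (max_lt (g_lt θ F hX₀c ih) ih)
    have hbmono : ∀ n, b n < b (n + 1) := by
      intro n
      rw [hbs, Ordinal.add_one_eq_succ]
      exact lt_of_le_of_lt (le_max_right _ _) (Order.lt_succ _)
    set γ := ⨆ n, b n with hγdef
    have hγlt : γ < omega1 := by
      apply Ordinal.iSup_lt_ord_lift
      · show Cardinal.lift.{0,0} (Cardinal.mk ℕ) < ((Cardinal.aleph 1).ord).cof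
        rw [Cardinal.isRegular_aleph_one.cof_eq]
        simpa using Cardinal.aleph0_lt_aleph_one
      · exact hblt
    have hble : ∀ n, b n ≤ γ := fun n => Ordinal.le_iSup b n
    have hltγ : ∀ o, o < γ ↔ ∃ n, o < b n := fun o => Ordinal.lt_iSup_iff
    have hsucclt : ∀ o : Ordinal.{0}, o < o + 1 := fun o => by
      rw [Ordinal.add_one_eq_succ]; exact Order.lt_succ o
    have hβ1γ : β + 1 ≤ γ := by rw [← hb0]; exact hble 0
    have h0γ : 0 < γ := lt_of_lt_of_le (lt_of_le_of_lt (zero_le (a := β)) (hsucclt β)) hβ1γ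
    have hγlim : ∀ o < γ, o + 1 < γ := by
      intro o ho
      obtain ⟨n, hn⟩ := (hltγ o).1 ho
      have h1 : o + 1 ≤ b (n+1) := Order.add_one_le_of_lt (hn.trans (hbmono n))
      exact lt_of_le_of_lt h1 (lt_of_lt_of_le (hbmono (n+1)) (hble (n+2)))
    have hgγ : gfun θ F X₀ γ = γ := by
      refine le_antisymm ?_ (g_ge θ F hX₀c hγlt)
      apply le_of_forall_lt
      intro o ho
      obtain ⟨γ', hγ'γ, hoγ'⟩ := (g_limit θ F hX₀c hγlt h0γ hγlim o).1 ho
      obtain ⟨n, hn⟩ := (hltγ γ').1 hγ'γ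
      calc o < gfun θ F X₀ γ' := hoγ'
        _ ≤ gfun θ F X₀ (b n) := g_mono θ F hX₀c (le_of_lt hn) (hblt n)
        _ ≤ max (gfun θ F X₀ (b n)) (b n) := le_max_left _ _
        _ < b (n + 1) := by rw [hbs]; exact hsucclt _
        _ ≤ γ := hble (n + 1)
    exact ⟨γ, ⟨hγlt, h0γ, hgγ⟩, lt_of_lt_of_le (hsucclt β) hβ1γ⟩

end Club

-- PART 6 : coding a stationary set of ordinals as a ZFSet
noncomputable def ordsetToZF (S : Set Ordinal.{0}) : ZFSet.{0} :=
  ZFSet.range fun i : {i : omega1.ToType //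
      ((Ordinal.ToType.mk (o := omega1)).symm i : Set.Iio omega1).1 ∈ S} =>
    vn ((Ordinal.ToType.mk (o := omega1)).symm i.1 : Set.Iio omega1).1

theorem mem_ordsetToZF {S : Set Ordinal.{0}} (hS : S ⊆ Set.Iio omega1) {x : ZFSet.{0}} :
    x ∈ ordsetToZF S ↔ ∃ o ∈ S, x = vn o := by
  rw [ordsetToZF, ZFSet.mem_range]
  constructor
  · rintro ⟨i, rfl⟩
    exact ⟨_, i.2, rfl⟩
  · rintro ⟨o, ho, rfl⟩
    refine ⟨⟨Ordinal.ToType.mk (o := omega1) ⟨o, hS ho⟩, by simp [ho]⟩, by simp⟩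

theorem zStat_ordsetToZF {S : Set Ordinal.{0}} (hS : StatBelowOmega1 S) :
    zStat (ordsetToZF S) := by
  constructor
  · intro x hx
    rw [ZFSet.mem_toSet] at hx
    obtain ⟨o, ho, rfl⟩ := (mem_ordsetToZF hS.1).1 hx
    exact ⟨isOrdinal_vn o, (rank_vn o).symm ▸ hS.1 ho⟩
  · intro C hC
    obtain ⟨o, hoS, hoC⟩ := hS.2 C hC
    refine ⟨vn o, ?_, ?_⟩
    · rw [ZFSet.mem_toSet]
      exact (mem_ordsetToZF hS.1).2 ⟨o, hoS, rfl⟩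
    · rw [rank_vn]; exact hoC
/-- if `D` is a predense family of stationary subsets of `ω₁` and
`θ ≥ ω₂` is regular, then `U := {M ≺ H_θ : M countable, M captures D}` is projectively
stationary: for every stationary `S ⊆ ω₁` and every `F : H_θ^{<ω} → H_θ` there is a
countable `M ≺ H_θ` in `U`, closed under `F`, with `δ_M ∈ S`. -/
theorem statement_19 (θ : Cardinal.{0}) (hreg : θ.IsRegular)
    (hθ : Cardinal.aleph 2 ≤ θ)
    (D : Set ZFSet.{0}) (hDstat : ∀ s ∈ D, zStat s)
    (hpredense : ∀ S : ZFSet.{0}, zStat S → ∃ T ∈ D, zStat (S ∩ T)) :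
    ∀ S : Set Ordinal.{0}, StatBelowOmega1 S →
      ∀ F : List ZFSet.{0} → ZFSet.{0},
        (∀ l : List ZFSet.{0}, (∀ x ∈ l, x ∈ HSet θ) → F l ∈ HSet θ) →
        ∃ m : ZFSet.{0}, m.toSet.Countable ∧
          ElemSub (restrictTo (memModel (HSet θ)) m.toSet) (memModel (HSet θ)) ∧
          Captures D m ∧
          (∀ l : List ZFSet.{0}, (∀ x ∈ l, x ∈ m) → F l ∈ m) ∧
          deltaOrd m.toSet ∈ S := by
  intro S hS F hF
  obtain ⟨T, hTD, hSTstat⟩ := hpredense (ordsetToZF S) (zStat_ordsetToZF hS)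
  have hTH : T ∈ HSet θ := mem_HSet_of_smallOrds hθ (fun x hx => (hDstat T hTD).1 x hx)
  have hX₀c : ({T} : Set ZFSet.{0}).Countable := Set.countable_singleton T
  obtain ⟨x, hxmem, hxC⟩ := hSTstat.2 (Cset θ F {T}) (Cset_club θ F hX₀c)
  rw [ZFSet.mem_toSet, ZFSet.mem_inter] at hxmem
  obtain ⟨hxS', hxT⟩ := hxmem
  obtain ⟨o, hoS, rfl⟩ := (mem_ordsetToZF hS.1).1 hxS'
  rw [rank_vn] at hxC
  obtain ⟨holt, hopos, hofix⟩ := hxC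
  have hYc : (hull θ F (seed {T} o)).Countable :=
    hull_countable θ F (seed_countable hX₀c holt)
  have hYH : hull θ F (seed {T} o) ⊆ HSet θ := by
    apply hull_subset_HSet θ F hθ hF
    rintro z (hz | ⟨o', ho', rfl⟩)
    · rw [Set.mem_singleton_iff] at hz
      subst hz
      exact hTH
    · exact vn_mem_HSet hθ (ho'.trans holt)
  have hYne : (hull θ F (seed {T} o)).Nonempty :=
    ⟨T, subset_hull θ F _ (Set.mem_union_left _ rfl)⟩
  obtain ⟨f, hf⟩ := hYc.exists_eq_range hYne
  have hmset : (ZFSet.range f).toSet = hull θ F (seed {T} o) := by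
    ext z
    rw [ZFSet.mem_toSet, ZFSet.mem_range, hf, Set.mem_range]
  have hdelta : deltaOrd (ZFSet.range f).toSet = o := by
    rw [hmset]
    exact hofix
  refine ⟨ZFSet.range f, ?_, ?_, ?_, ?_, ?_⟩
  · rw [hmset]; exact hYc
  · rw [hmset]
    exact elemSub_of_skClosed (hull_closed θ F _).1
  · refine ⟨T, hTD, ?_, vn o, ?_, ?_⟩
    · rw [← ZFSet.mem_toSet, hmset]
      exact subset_hull θ F _ (Set.mem_union_left _ rfl)
    · rw [ZFSet.mem_toSet]
      exact hxT
    · rw [rank_vn, hdelta]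
  · intro l hl
    rw [← ZFSet.mem_toSet, hmset]
    refine (hull_closed θ F _).2.1 l fun x hx => ?_
    have := hl x hx
    rwa [← ZFSet.mem_toSet, hmset] at this
  · rw [hdelta]
    exact hoS

end NSF
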